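/- Let β ∈ (0,1]. Then μ_β(E(0,0)) = 0, and for every pair (k₁, k₂) ∈ ℕ₀² with (k₁,k₂) ≠ (0,0) one has μ_β(E(k₁, k₂)) ≥ (1+β)·(μ(k₁) + μ(k₂) − 1). -/

import Mathlib

open scoped Classical

noncomputable section

/-- `μ_β(k)`: for `k = 2^{a₁} + 2^{a₂} + ℓ` with `a₁ > a₂ ≥ 0` and `0 ≤ ℓ < 2^{a₂}` this is
`a₁ + β·a₂`; for `k = 2^{a₁}` it is `a₁`; and `μ_β(0) = 0`. -/
def mub (β : ℝ) (k : ℕ) : ℝ :=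
  if k = 0 then 0
  else (Nat.log2 k : ℝ) +
    (if k % 2 ^ Nat.log2 k = 0 then 0 else β * (Nat.log2 (k % 2 ^ Nat.log2 k) : ℝ))

/-- The digit interlacing function `E : ℕ₀² → ℕ₀`,
`E(ℓ₁,ℓ₂) = Σ_a (ℓ_{1,a}·2^{2a} + ℓ_{2,a}·2^{2a+1})`. -/
def interE (l1 l2 : ℕ) : ℕ :=
  ∑ a ∈ Finset.range (Nat.size l1 ⊔ Nat.size l2),
    ((l1.testBit a).toNat * 2 ^ (2 * a) + (l2.testBit a).toNat * 2 ^ (2 * a + 1))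

lemma testBit_log2' {l : ℕ} (h : l ≠ 0) : l.testBit (Nat.log2 l) = true := by
  rw [Nat.testBit_eq_decide_div_mod_eq]
  have h1 : 2 ^ Nat.log2 l ≤ l := Nat.log2_self_le h
  have h2 : l < 2 ^ (Nat.log2 l + 1) := Nat.lt_log2_self
  have hd : l / 2 ^ Nat.log2 l = 1 := by
    rw [pow_succ] at h2
    have h0 : 0 < 2 ^ Nat.log2 l := Nat.pow_pos (by norm_num)
    have hge : 1 ≤ l / 2 ^ Nat.log2 l := (Nat.one_le_div_iff h0).mpr h1
    have hlt : l / 2 ^ Nat.log2 l < 2 := (Nat.div_lt_iff_lt_mul h0).mpr (by omega)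
    omega
  simp [hd]

lemma geom3 (n : ℕ) : 3 * ∑ a ∈ Finset.range n, 4 ^ a + 1 = 4 ^ n := by
  induction n with
  | zero => simp
  | succ n ih => rw [Finset.sum_range_succ, pow_succ]; omega

lemma interE_lb (l1 l2 : ℕ) (h1 : l1 ≠ 0) (h2 : l2 ≠ 0) :
    2 ^ (2 * Nat.log2 l1) + 2 ^ (2 * Nat.log2 l2 + 1) ≤ interE l1 l2 := by
  have hm1 : Nat.log2 l1 < Nat.size l1 ⊔ Nat.size l2 :=
    lt_of_lt_of_le (Nat.lt_size.mpr (Nat.log2_self_le h1)) le_sup_left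
  have hm2 : Nat.log2 l2 < Nat.size l1 ⊔ Nat.size l2 :=
    lt_of_lt_of_le (Nat.lt_size.mpr (Nat.log2_self_le h2)) le_sup_right
  have hb1 := testBit_log2' h1
  have hb2 := testBit_log2' h2
  unfold interE
  by_cases heq : Nat.log2 l1 = Nat.log2 l2
  · rw [heq] at hb1 ⊢
    calc 2 ^ (2 * Nat.log2 l2) + 2 ^ (2 * Nat.log2 l2 + 1)
        = (l1.testBit (Nat.log2 l2)).toNat * 2 ^ (2 * Nat.log2 l2)
          + (l2.testBit (Nat.log2 l2)).toNat * 2 ^ (2 * Nat.log2 l2 + 1) := by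
          rw [hb1, hb2]; simp
      _ ≤ _ := Finset.single_le_sum (f := fun a =>
          (l1.testBit a).toNat * 2 ^ (2 * a) + (l2.testBit a).toNat * 2 ^ (2 * a + 1))
          (fun i _ => Nat.zero_le _) (Finset.mem_range.mpr (heq ▸ hm1))
  · have hsub : ({Nat.log2 l1, Nat.log2 l2} : Finset ℕ) ⊆
        Finset.range (Nat.size l1 ⊔ Nat.size l2) := by
      intro x hx
      simp only [Finset.mem_insert, Finset.mem_singleton] at hx
      rcases hx with rfl | rfl <;> simp [hm1, hm2]
    have hle := Finset.sum_le_sum_of_subset (f := fun a =>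
      (l1.testBit a).toNat * 2 ^ (2 * a) + (l2.testBit a).toNat * 2 ^ (2 * a + 1)) hsub
    rw [Finset.sum_pair heq] at hle
    refine le_trans ?_ hle
    simp only [hb1, hb2, Bool.toNat_true, one_mul]
    omega

lemma interE_lb₁ (l1 l2 : ℕ) (h1 : l1 ≠ 0) :
    2 ^ (2 * Nat.log2 l1) ≤ interE l1 l2 := by
  have hm1 : Nat.log2 l1 < Nat.size l1 ⊔ Nat.size l2 :=
    lt_of_lt_of_le (Nat.lt_size.mpr (Nat.log2_self_le h1)) le_sup_left
  have hb1 := testBit_log2' h1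
  calc 2 ^ (2 * Nat.log2 l1)
      ≤ (l1.testBit (Nat.log2 l1)).toNat * 2 ^ (2 * Nat.log2 l1)
        + (l2.testBit (Nat.log2 l1)).toNat * 2 ^ (2 * Nat.log2 l1 + 1) := by
        rw [hb1]; simp
    _ ≤ _ := Finset.single_le_sum (f := fun a =>
        (l1.testBit a).toNat * 2 ^ (2 * a) + (l2.testBit a).toNat * 2 ^ (2 * a + 1))
        (fun i _ => Nat.zero_le _) (Finset.mem_range.mpr hm1)

lemma interE_lb₂ (l1 l2 : ℕ) (h2 : l2 ≠ 0) :
    2 ^ (2 * Nat.log2 l2 + 1) ≤ interE l1 l2 := by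
  have hm2 : Nat.log2 l2 < Nat.size l1 ⊔ Nat.size l2 :=
    lt_of_lt_of_le (Nat.lt_size.mpr (Nat.log2_self_le h2)) le_sup_right
  have hb2 := testBit_log2' h2
  calc 2 ^ (2 * Nat.log2 l2 + 1)
      ≤ (l1.testBit (Nat.log2 l2)).toNat * 2 ^ (2 * Nat.log2 l2)
        + (l2.testBit (Nat.log2 l2)).toNat * 2 ^ (2 * Nat.log2 l2 + 1) := by
        rw [hb2]; simp
    _ ≤ _ := Finset.single_le_sum (f := fun a =>
        (l1.testBit a).toNat * 2 ^ (2 * a) + (l2.testBit a).toNat * 2 ^ (2 * a + 1))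
        (fun i _ => Nat.zero_le _) (Finset.mem_range.mpr hm2)

lemma sum_bits_le (l s : ℕ) (hls : Nat.size l ≤ s) :
    3 * (∑ a ∈ Finset.range s, (l.testBit a).toNat * 4 ^ a) + 1 ≤ 4 ^ Nat.size l := by
  have hzero : ∀ a ∈ Finset.range s, a ∉ Finset.range (Nat.size l) →
      (l.testBit a).toNat * 4 ^ a = 0 := by
    intro a _ ha
    have hsa : Nat.size l ≤ a := by simpa using ha
    have hlt : l < 2 ^ a :=
      lt_of_lt_of_le (Nat.lt_size_self l) (Nat.pow_le_pow_right (by norm_num) hsa)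
    simp [Nat.testBit_lt_two_pow hlt]
  rw [← Finset.sum_subset (Finset.range_subset_range.mpr hls) hzero]
  have hle : (∑ a ∈ Finset.range (Nat.size l), (l.testBit a).toNat * 4 ^ a)
      ≤ ∑ a ∈ Finset.range (Nat.size l), 4 ^ a := by
    apply Finset.sum_le_sum
    intro i _
    calc (l.testBit i).toNat * 4 ^ i ≤ 1 * 4 ^ i :=
        Nat.mul_le_mul_right _ (Bool.toNat_le _)
      _ = 4 ^ i := one_mul _
  have := geom3 (Nat.size l)
  omega

lemma interE_ub (l1 l2 : ℕ) :
    3 * interE l1 l2 + 3 ≤ 4 ^ Nat.size l1 + 2 * 4 ^ Nat.size l2 := by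
  have hrw : interE l1 l2 =
      (∑ a ∈ Finset.range (Nat.size l1 ⊔ Nat.size l2), (l1.testBit a).toNat * 4 ^ a)
        + 2 * ∑ a ∈ Finset.range (Nat.size l1 ⊔ Nat.size l2), (l2.testBit a).toNat * 4 ^ a := by
    unfold interE
    rw [Finset.sum_add_distrib, Finset.mul_sum]
    congr 1
    · refine Finset.sum_congr rfl fun a _ => ?_
      rw [pow_mul]; norm_num
    · refine Finset.sum_congr rfl fun a _ => ?_
      rw [pow_succ, pow_mul]; norm_num; ring
  have h1 := sum_bits_le l1 _ (le_sup_left : Nat.size l1 ≤ Nat.size l1 ⊔ Nat.size l2)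
  have h2 := sum_bits_le l2 _ (le_sup_right : Nat.size l2 ≤ Nat.size l1 ⊔ Nat.size l2)
  omega

lemma mub_ge_log2 (β : ℝ) (hβ : 0 ≤ β) (n : ℕ) (hn : n ≠ 0) :
    (Nat.log2 n : ℝ) ≤ mub β n := by
  unfold mub
  rw [if_neg hn]
  refine le_add_of_nonneg_right ?_
  split
  · exact le_rfl
  · positivity

lemma mub_key (β : ℝ) (hβ : 0 < β) (n M m : ℕ) (hmM : m < M)
    (h1 : 2 ^ M + 2 ^ m ≤ n) (h2 : n < 2 ^ (M + 1)) :
    (M : ℝ) + β * m ≤ mub β n := by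
  have hpM : 0 < 2 ^ M := Nat.pow_pos (by norm_num)
  have hpm : 0 < 2 ^ m := Nat.pow_pos (by norm_num)
  have hn : n ≠ 0 := by omega
  have hL : Nat.log2 n = M :=
    le_antisymm (by have := (Nat.log2_lt hn).mpr h2; omega)
      ((Nat.le_log2 hn).mpr (le_trans (Nat.le_add_right _ _) h1))
  have hMM : 2 ^ (M + 1) = 2 ^ M * 2 := pow_succ 2 M
  have hrem : n % 2 ^ M = n - 2 ^ M := by
    rw [Nat.mod_eq_sub_mod (by omega), Nat.mod_eq_of_lt (by omega)]
  have hrne : n % 2 ^ M ≠ 0 := by omega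
  have hlog : m ≤ Nat.log2 (n % 2 ^ M) := (Nat.le_log2 hrne).mpr (by omega)
  unfold mub
  rw [if_neg hn, hL, if_neg hrne]
  have : (m : ℝ) ≤ (Nat.log2 (n % 2 ^ M) : ℝ) := by exact_mod_cast hlog
  nlinarith

lemma four_pow_eq (k : ℕ) : (4 : ℕ) ^ k = 2 ^ (2 * k) := by
  rw [pow_mul]; norm_num

theorem stmt9 (β : ℝ) (hβ : β ∈ Set.Ioc (0:ℝ) 1) :
    mub β (interE 0 0) = 0 ∧
      ∀ k₁ k₂ : ℕ, (k₁, k₂) ≠ (0, 0) →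
        (1 + β) * ((Nat.log2 k₁ : ℝ) + (Nat.log2 k₂ : ℝ) - 1) ≤ mub β (interE k₁ k₂) := by
  obtain ⟨hβ0, hβ1⟩ := hβ
  constructor
  · have : interE 0 0 = 0 := by simp [interE]
    rw [this]; simp [mub]
  · intro k₁ k₂ hk
    have hsize : ∀ l : ℕ, l ≠ 0 → Nat.size l ≤ Nat.log2 l + 1 := fun l hl =>
      Nat.size_le.mpr Nat.lt_log2_self
    rcases Nat.eq_zero_or_pos k₁ with hz1 | hp1
    · subst hz1
      have hk2 : k₂ ≠ 0 := by simpa using hk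
      have hlb := interE_lb₂ 0 k₂ hk2
      have hne : interE 0 k₂ ≠ 0 := by
        have : 0 < 2 ^ (2 * Nat.log2 k₂ + 1) := Nat.pow_pos (by norm_num)
        omega
      have hlog : 2 * Nat.log2 k₂ + 1 ≤ Nat.log2 (interE 0 k₂) :=
        (Nat.le_log2 hne).mpr hlb
      have h1 : ((2 * Nat.log2 k₂ + 1 : ℕ) : ℝ) ≤ (Nat.log2 (interE 0 k₂) : ℝ) := by
        exact_mod_cast hlog
      have h2 := mub_ge_log2 β hβ0.le (interE 0 k₂) hne
      have hL0 : Nat.log2 0 = 0 := by simp [Nat.log2]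
      rw [hL0]
      push_cast at h1 ⊢
      have hm2 : (0 : ℝ) ≤ (Nat.log2 k₂ : ℝ) := Nat.cast_nonneg _
      nlinarith
    · rcases Nat.eq_zero_or_pos k₂ with hz2 | hp2
      · subst hz2
        have hk1 : k₁ ≠ 0 := by omega
        have hlb := interE_lb₁ k₁ 0 hk1
        have hne : interE k₁ 0 ≠ 0 := by
          have : 0 < 2 ^ (2 * Nat.log2 k₁) := Nat.pow_pos (by norm_num)
          omega
        have hlog : 2 * Nat.log2 k₁ ≤ Nat.log2 (interE k₁ 0) :=
          (Nat.le_log2 hne).mpr hlb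
        have h1 : ((2 * Nat.log2 k₁ : ℕ) : ℝ) ≤ (Nat.log2 (interE k₁ 0) : ℝ) := by
          exact_mod_cast hlog
        have h2 := mub_ge_log2 β hβ0.le (interE k₁ 0) hne
        have hL0 : Nat.log2 0 = 0 := by simp [Nat.log2]
        rw [hL0]
        push_cast at h1 ⊢
        have hm1 : (0 : ℝ) ≤ (Nat.log2 k₁ : ℝ) := Nat.cast_nonneg _
        nlinarith
      · have hk1 : k₁ ≠ 0 := by omega
        have hk2 : k₂ ≠ 0 := by omega
        set m₁ := Nat.log2 k₁ with hm₁
        set m₂ := Nat.log2 k₂ with hm₂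
        have hlb := interE_lb k₁ k₂ hk1 hk2
        have hub := interE_ub k₁ k₂
        rw [← hm₁, ← hm₂] at hlb
        have hs1 : 4 ^ Nat.size k₁ ≤ 2 ^ (2 * m₁ + 2) := by
          rw [show 2 * m₁ + 2 = 2 * (m₁ + 1) by ring, ← four_pow_eq]
          exact Nat.pow_le_pow_right (by norm_num) (hsize k₁ hk1)
        have hs2 : 4 ^ Nat.size k₂ ≤ 2 ^ (2 * m₂ + 2) := by
          rw [show 2 * m₂ + 2 = 2 * (m₂ + 1) by ring, ← four_pow_eq]
          exact Nat.pow_le_pow_right (by norm_num) (hsize k₂ hk2)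
        have hm1R : (0 : ℝ) ≤ (m₁ : ℝ) := Nat.cast_nonneg _
        have hm2R : (0 : ℝ) ≤ (m₂ : ℝ) := Nat.cast_nonneg _
        rcases le_or_gt m₁ m₂ with hc | hc
        · -- M = 2m₂+1, m = 2m₁
          have hup : interE k₁ k₂ < 2 ^ (2 * m₂ + 1 + 1) := by
            have hmono : (2:ℕ) ^ (2 * m₁ + 2) ≤ 2 ^ (2 * m₂ + 2) :=
              Nat.pow_le_pow_right (by norm_num) (by omega)
            have he : (2:ℕ) ^ (2 * m₂ + 1 + 1) = 2 ^ (2 * m₂ + 2) := by ring_nf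
            omega
          have hkey := mub_key β hβ0 (interE k₁ k₂) (2 * m₂ + 1) (2 * m₁)
            (by omega) (by omega) hup
          refine le_trans ?_ hkey
          push_cast
          have hcR : (m₁ : ℝ) ≤ (m₂ : ℝ) := by exact_mod_cast hc
          nlinarith [mul_nonneg (sub_nonneg.mpr hβ1) (sub_nonneg.mpr hcR)]
        · -- M = 2m₁, m = 2m₂+1
          have hup : interE k₁ k₂ < 2 ^ (2 * m₁ + 1) := by
            have hmono : (2:ℕ) ^ (2 * m₂ + 2) ≤ 2 ^ (2 * m₁) :=
              Nat.pow_le_pow_right (by norm_num) (by omega)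
            have he : (2:ℕ) ^ (2 * m₁ + 2) = 2 ^ (2 * m₁) * 4 := by
              rw [pow_add]; norm_num
            have he2 : (2:ℕ) ^ (2 * m₁ + 1) = 2 ^ (2 * m₁) * 2 := pow_succ 2 _
            omega
          have hkey := mub_key β hβ0 (interE k₁ k₂) (2 * m₁) (2 * m₂ + 1)
            (by omega) (by omega) hup
          refine le_trans ?_ hkey
          push_cast
          have hcR : (m₂ : ℝ) ≤ (m₁ : ℝ) := by exact_mod_cast hc.le
          nlinarith [mul_nonneg (sub_nonneg.mpr hβ1) (sub_nonneg.mpr hcR)]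

end
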